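/- The image of G under the evaluation map i : G → Sp(BD_p(G)), (i(g))(f) = f(g), is dense in the spectrum Sp(BD_p(G)) with respect to the weak-* topology. -/

import Mathlib

open Filter Topology

namespace PHB

variable {G : Type*} [Group G]

/-- One Dirichlet term `‖f(gs⁻¹) − f(g)‖^p`. -/
noncomputable def dpTerm (p : ℝ) (f : G → ℂ) (s g : G) : ℝ := ‖f (g * s⁻¹) - f g‖ ^ p

/-- Membership in `D_p(G)`. -/
def MemDp (p : ℝ) (S : Finset G) (f : G → ℂ) : Prop :=
  ∀ s ∈ S, Summable (dpTerm p f s)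

/-- The Dirichlet `p`-sum `∑_{s∈S}∑_{g∈G} ‖f(gs⁻¹) − f(g)‖^p`. -/
noncomputable def dirSum (p : ℝ) (S : Finset G) (f : G → ℂ) : ℝ :=
  ∑ s ∈ S, ∑' g, dpTerm p f s g

/-- The `D_p`-norm `(∑_{s,g}|f(gs⁻¹)−f(g)|^p + |f(e)|^p)^{1/p}`. -/
noncomputable def dpNorm (p : ℝ) (S : Finset G) (f : G → ℂ) : ℝ :=
  (dirSum p S f + ‖f 1‖ ^ p) ^ (1/p)

/-- The norm on `D_p(G)/ℂ`: `(∑_{s,g}|f(gs⁻¹)−f(g)|^p)^{1/p}`. -/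
noncomputable def qNorm (p : ℝ) (S : Finset G) (f : G → ℂ) : ℝ :=
  dirSum p S f ^ (1/p)

/-- Boundedness of a function. -/
def BddFun (f : G → ℂ) : Prop := ∃ M : ℝ, ∀ g, ‖f g‖ ≤ M

/-- The sup norm. -/
noncomputable def supNorm (f : G → ℂ) : ℝ := ⨆ g, ‖f g‖

/-- The `BD_p`-norm `‖f‖_∞ + (∑_{s,g}|f(gs⁻¹)−f(g)|^p)^{1/p}`. -/
noncomputable def bdpNorm (p : ℝ) (S : Finset G) (f : G → ℂ) : ℝ :=
  supNorm f + dirSum p S f ^ (1/p)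

/-- Membership in `BD_p(G)`: bounded and finite Dirichlet `p`-sum. -/
def MemBDp (p : ℝ) (S : Finset G) (f : G → ℂ) : Prop := BddFun f ∧ MemDp p S f

/-- Membership in `ℓ^p(G)`. -/
def MemLp' (p : ℝ) (f : G → ℂ) : Prop := Summable fun g => ‖f g‖ ^ p

/-- `f` lies in the `D_p`-closure of the finitely supported functions `ℂG`. -/
def InClosCG (p : ℝ) (S : Finset G) (f : G → ℂ) : Prop :=
  MemDp p S f ∧ ∀ ε : ℝ, 0 < ε →
    ∃ h : G → ℂ, (Function.support h).Finite ∧ dpNorm p S (f - h) < ε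

/-- `f` is a bounded function in the `D_p`-closure of `ℂG`. -/
def InBClosCG (p : ℝ) (S : Finset G) (f : G → ℂ) : Prop := BddFun f ∧ InClosCG p S f

/-- `f` lies in the `D_p`-closure of `ℓ^p(G)`. -/
def InClosLp (p : ℝ) (S : Finset G) (f : G → ℂ) : Prop :=
  MemDp p S f ∧ ∀ ε : ℝ, 0 < ε →
    ∃ h : G → ℂ, MemLp' p h ∧ dpNorm p S (f - h) < ε

/-- `f` is a bounded function in the `D_p`-closure of `ℓ^p(G)`. -/
def InBClosLp (p : ℝ) (S : Finset G) (f : G → ℂ) : Prop := BddFun f ∧ InClosLp p S f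

/-- `f` lies in the `D_p`-closure of `ℓ^p(G) ⊕ ℂ`. -/
def InClosLpC (p : ℝ) (S : Finset G) (f : G → ℂ) : Prop :=
  MemDp p S f ∧ ∀ ε : ℝ, 0 < ε →
    ∃ (h : G → ℂ) (c : ℂ), MemLp' p h ∧ dpNorm p S (f - h - Function.const G c) < ε

/-- A character (nonzero multiplicative linear functional) on `BD_p(G)`. -/
structure BDpChar (p : ℝ) (S : Finset G) where
  toFun : {f : G → ℂ // MemBDp p S f} → ℂ
  map_add : ∀ (f h : {f : G → ℂ // MemBDp p S f}) (hm : MemBDp p S (f.1 + h.1)),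
    toFun ⟨f.1 + h.1, hm⟩ = toFun f + toFun h
  map_mul : ∀ (f h : {f : G → ℂ // MemBDp p S f}) (hm : MemBDp p S (f.1 * h.1)),
    toFun ⟨f.1 * h.1, hm⟩ = toFun f * toFun h
  map_smul : ∀ (c : ℂ) (f : {f : G → ℂ // MemBDp p S f}) (hm : MemBDp p S (c • f.1)),
    toFun ⟨c • f.1, hm⟩ = c * toFun f
  map_one : ∀ hm : MemBDp p S (1 : G → ℂ), toFun ⟨1, hm⟩ = 1

/-- The weak-* topology on the spectrum `Sp(BD_p(G))`. -/
noncomputable instance (p : ℝ) (S : Finset G) : TopologicalSpace (BDpChar p S) :=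
  TopologicalSpace.induced BDpChar.toFun Pi.topologicalSpace

/-- The evaluation embedding `i : G → Sp(BD_p(G))`, `(i g)(f) = f(g)`. -/
def evalChar (p : ℝ) (S : Finset G) (g : G) : BDpChar p S where
  toFun := fun f => f.1 g
  map_add := fun _ _ _ => rfl
  map_mul := fun _ _ _ => rfl
  map_smul := fun _ _ _ => rfl
  map_one := fun _ => rfl

/-- The `p`-Laplacian `Δ_p f(g) = ∑_{s∈S} |f(gs⁻¹)−f(g)|^{p−2}(f(gs⁻¹)−f(g))`. -/
noncomputable def pLap (p : ℝ) (S : Finset G) (f : G → ℂ) (g : G) : ℂ :=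
  ∑ s ∈ S, ((‖f (g * s⁻¹) - f g‖ ^ (p - 2) : ℝ) : ℂ) * (f (g * s⁻¹) - f g)

/-- `f` is `p`-harmonic: `f ∈ D_p(G)` and `Δ_p f ≡ 0`. -/
def PHarmonic (p : ℝ) (S : Finset G) (f : G → ℂ) : Prop :=
  MemDp p S f ∧ ∀ g, pLap p S f g = 0

/-- The `p`-harmonic boundary `∂_p(G) ⊆ Sp(BD_p(G)) \ G`. -/
def pBoundary (p : ℝ) (S : Finset G) : Set (BDpChar p S) :=
  {x | (∀ g : G, x ≠ evalChar p S g) ∧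
    ∀ (f : G → ℂ) (hf : MemBDp p S f), InBClosCG p S f → x.toFun ⟨f, hf⟩ = 0}

/-- The word metric on `G` with respect to the generating set `S`. -/
noncomputable def wordDist (S : Finset G) (x y : G) : ℕ :=
  sInf {n | ∃ l : List G, (∀ a ∈ l, a ∈ S) ∧ l.length = n ∧ x⁻¹ * y = l.prod}

/-- The word length `|g| = d(e,g)`. -/
noncomputable def wordLen (S : Finset G) (g : G) : ℕ := wordDist S 1 g

/-- Right translation `f_x(g) = f(gx⁻¹)`. -/
def translateFun (f : G → ℂ) (x : G) : G → ℂ := fun g => f (g * x⁻¹)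

/-- `φ : G → H` is a rough isometry with constants `a, b, c` for the word metrics. -/
def RoughIsom {G H : Type*} [Group G] [Group H] (S : Finset G) (T : Finset H)
    (φ : G → H) (a b c : ℝ) : Prop :=
  1 ≤ a ∧ 0 ≤ b ∧ 0 < c ∧
  (∀ x y : G, (1/a) * (wordDist S x y : ℝ) - b ≤ (wordDist T (φ x) (φ y) : ℝ) ∧
    (wordDist T (φ x) (φ y) : ℝ) ≤ a * (wordDist S x y : ℝ) + b) ∧
  ∀ h : H, ∃ x : G, (wordDist T (φ x) h : ℝ) < c

/-- `S` is a symmetric generating set of `G`. -/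
def SymmGen (S : Finset G) : Prop :=
  (∀ s ∈ S, s⁻¹ ∈ S) ∧ Subgroup.closure (S : Set G) = ⊤

end PHB

open PHB

namespace Aux

variable {G : Type*} [Group G]

lemma rpow_add_le {p a b : ℝ} (hp : 1 ≤ p) (ha : 0 ≤ a) (hb : 0 ≤ b) :
    (a + b) ^ p ≤ 2 ^ p * (a ^ p + b ^ p) := by
  have hp0 : (0:ℝ) ≤ p := by linarith
  have h1 : a + b ≤ 2 * max a b := by
    rcases le_total a b with h | h
    · have := le_max_right a b; nlinarith [le_max_right a b]
    · nlinarith [le_max_left a b]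
  have hm : 0 ≤ max a b := le_max_of_le_left ha
  calc (a + b) ^ p ≤ (2 * max a b) ^ p :=
        Real.rpow_le_rpow (by linarith) h1 hp0
    _ = 2 ^ p * (max a b) ^ p := Real.mul_rpow (by norm_num) hm
    _ ≤ 2 ^ p * (a ^ p + b ^ p) := by
        have : (max a b) ^ p ≤ a ^ p + b ^ p := by
          rcases max_cases a b with ⟨h, _⟩ | ⟨h, _⟩
          · rw [h]; nlinarith [Real.rpow_nonneg hb p]
          · rw [h]; nlinarith [Real.rpow_nonneg ha p]
        have h2 : (0:ℝ) ≤ 2 ^ p := Real.rpow_nonneg (by norm_num) p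
        nlinarith

/-- Comparison lemma for membership in `D_p`. -/
lemma memDp_of_bound {p : ℝ} (hp : 1 ≤ p) {S : Finset G} {u f h : G → ℂ} {C : ℝ}
    (hC : 0 ≤ C) (hf : MemDp p S f) (hh : MemDp p S h)
    (hb : ∀ s g, ‖u (g * s⁻¹) - u g‖ ≤ C * ‖f (g * s⁻¹) - f g‖ + C * ‖h (g * s⁻¹) - h g‖) :
    MemDp p S u := by
  intro s hs
  have hsum : Summable (fun g => (2 ^ p * C ^ p) * (dpTerm p f s g + dpTerm p h s g)) :=
    (((hf s hs).add (hh s hs)).mul_left _)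
  refine hsum.of_nonneg_of_le (fun g => Real.rpow_nonneg (norm_nonneg _) p) (fun g => ?_)
  have hp0 : (0:ℝ) ≤ p := by linarith
  have h1 : dpTerm p u s g ≤ (C * ‖f (g * s⁻¹) - f g‖ + C * ‖h (g * s⁻¹) - h g‖) ^ p :=
    Real.rpow_le_rpow (norm_nonneg _) (hb s g) hp0
  have h2 : (C * ‖f (g * s⁻¹) - f g‖ + C * ‖h (g * s⁻¹) - h g‖) ^ p
      ≤ 2 ^ p * ((C * ‖f (g * s⁻¹) - f g‖) ^ p + (C * ‖h (g * s⁻¹) - h g‖) ^ p) :=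
    rpow_add_le hp (by positivity) (by positivity)
  have h3 : (C * ‖f (g * s⁻¹) - f g‖) ^ p = C ^ p * dpTerm p f s g :=
    Real.mul_rpow hC (norm_nonneg _)
  have h4 : (C * ‖h (g * s⁻¹) - h g‖) ^ p = C ^ p * dpTerm p h s g :=
    Real.mul_rpow hC (norm_nonneg _)
  rw [h3, h4] at h2
  calc dpTerm p u s g ≤ _ := h1
    _ ≤ _ := h2
    _ = (2 ^ p * C ^ p) * (dpTerm p f s g + dpTerm p h s g) := by ring

lemma memDp_const {p : ℝ} (hp : 1 ≤ p) (S : Finset G) (c : ℂ) :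
    MemDp p S (fun _ => c) := by
  intro s _
  have : (dpTerm p (fun _ : G => c) s) = fun _ => 0 := by
    funext g
    simp [dpTerm, Real.zero_rpow (by linarith : p ≠ 0)]
  rw [this]; exact summable_zero

lemma memDp_sub_const {p : ℝ} {S : Finset G} {f : G → ℂ} (hf : MemDp p S f) (c : ℂ) :
    MemDp p S (fun g => f g - c) := by
  intro s hs
  have : (dpTerm p (fun g => f g - c) s) = dpTerm p f s := by
    funext g; simp only [dpTerm]; ring_nf
  rw [this]; exact hf s hs

lemma bddFun_bound {f : G → ℂ} (hf : BddFun f) : ∃ M : ℝ, 0 ≤ M ∧ ∀ g, ‖f g‖ ≤ M := by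
  obtain ⟨M, hM⟩ := hf
  exact ⟨max M 0, le_max_right _ _, fun g => le_max_of_le_left (hM g)⟩

lemma memBDp_mul {p : ℝ} (hp : 1 ≤ p) {S : Finset G} {f h : G → ℂ}
    (hf : MemBDp p S f) (hh : MemBDp p S h) : MemBDp p S (f * h) := by
  obtain ⟨Mf, hMf0, hMf⟩ := bddFun_bound hf.1
  obtain ⟨Mh, hMh0, hMh⟩ := bddFun_bound hh.1
  constructor
  · exact ⟨Mf * Mh, fun g => by
      simpa [norm_mul] using mul_le_mul (hMf g) (hMh g) (norm_nonneg _) hMf0⟩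
  · refine memDp_of_bound (C := max Mf Mh) hp (le_max_of_le_left hMf0) hf.2 hh.2 (fun s g => ?_)
    have key : (f * h) (g * s⁻¹) - (f * h) g
        = f (g * s⁻¹) * (h (g * s⁻¹) - h g) + h g * (f (g * s⁻¹) - f g) := by
      simp [Pi.mul_apply]; ring
    rw [key]
    calc ‖f (g * s⁻¹) * (h (g * s⁻¹) - h g) + h g * (f (g * s⁻¹) - f g)‖
        ≤ ‖f (g * s⁻¹) * (h (g * s⁻¹) - h g)‖ + ‖h g * (f (g * s⁻¹) - f g)‖ := norm_add_le _ _
      _ = ‖f (g * s⁻¹)‖ * ‖h (g * s⁻¹) - h g‖ + ‖h g‖ * ‖f (g * s⁻¹) - f g‖ := by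
          rw [norm_mul, norm_mul]
      _ ≤ max Mf Mh * ‖f (g * s⁻¹) - f g‖ + max Mf Mh * ‖h (g * s⁻¹) - h g‖ := by
          have := mul_le_mul_of_nonneg_right (le_max_of_le_left (hMf (g * s⁻¹)) :
            ‖f (g*s⁻¹)‖ ≤ max Mf Mh) (norm_nonneg (h (g*s⁻¹) - h g))
          have := mul_le_mul_of_nonneg_right (le_max_of_le_right (hMh g) :
            ‖h g‖ ≤ max Mf Mh) (norm_nonneg (f (g*s⁻¹) - f g))
          nlinarith [mul_le_mul_of_nonneg_right (le_max_of_le_left (hMf (g * s⁻¹)) :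
            ‖f (g*s⁻¹)‖ ≤ max Mf Mh) (norm_nonneg (h (g*s⁻¹) - h g)),
            mul_le_mul_of_nonneg_right (le_max_of_le_right (hMh g) :
            ‖h g‖ ≤ max Mf Mh) (norm_nonneg (f (g*s⁻¹) - f g))]

lemma memBDp_add {p : ℝ} (hp : 1 ≤ p) {S : Finset G} {f h : G → ℂ}
    (hf : MemBDp p S f) (hh : MemBDp p S h) : MemBDp p S (f + h) := by
  obtain ⟨Mf, hMf⟩ := hf.1
  obtain ⟨Mh, hMh⟩ := hh.1
  constructor
  · exact ⟨Mf + Mh, fun g => le_trans (norm_add_le _ _) (add_le_add (hMf g) (hMh g))⟩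
  · refine memDp_of_bound hp zero_le_one hf.2 hh.2 (fun s g => ?_)
    have key : (f + h) (g * s⁻¹) - (f + h) g
        = (f (g * s⁻¹) - f g) + (h (g * s⁻¹) - h g) := by simp [Pi.add_apply]; ring
    rw [key]
    simpa using norm_add_le (f (g*s⁻¹) - f g) (h (g*s⁻¹) - h g)

lemma memBDp_const {p : ℝ} (hp : 1 ≤ p) (S : Finset G) (c : ℂ) :
    MemBDp p S (fun _ => c) :=
  ⟨⟨‖c‖, fun _ => le_rfl⟩, memDp_const hp S c⟩

lemma memBDp_one {p : ℝ} (hp : 1 ≤ p) (S : Finset G) : MemBDp p S (1 : G → ℂ) :=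
  memBDp_const hp S 1

lemma memBDp_zero {p : ℝ} (hp : 1 ≤ p) (S : Finset G) : MemBDp p S (0 : G → ℂ) :=
  memBDp_const hp S 0

lemma memBDp_sub_const {p : ℝ} {S : Finset G} {f : G → ℂ} (hf : MemBDp p S f) (c : ℂ) :
    MemBDp p S (fun g => f g - c) := by
  obtain ⟨M, hM⟩ := hf.1
  exact ⟨⟨M + ‖c‖, fun g => le_trans (norm_sub_le _ _) (by
    have := hM g; linarith)⟩, memDp_sub_const hf.2 c⟩

lemma memBDp_conj {p : ℝ} {S : Finset G} {f : G → ℂ} (hf : MemBDp p S f) :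
    MemBDp p S (fun g => (starRingEnd ℂ) (f g)) := by
  obtain ⟨M, hM⟩ := hf.1
  refine ⟨⟨M, fun g => by simpa using hM g⟩, fun s hs => ?_⟩
  have : dpTerm p (fun g => (starRingEnd ℂ) (f g)) s = dpTerm p f s := by
    funext g
    simp only [dpTerm, ← map_sub]
    rw [RCLike.norm_conj]
  rw [this]; exact hf.2 s hs

lemma memBDp_smul {p : ℝ} (hp : 1 ≤ p) {S : Finset G} {f : G → ℂ} (c : ℂ)
    (hf : MemBDp p S f) : MemBDp p S (c • f) := by
  obtain ⟨M, hM0, hM⟩ := bddFun_bound hf.1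
  constructor
  · exact ⟨‖c‖ * M, fun g => by
      simpa [norm_smul] using mul_le_mul_of_nonneg_left (hM g) (norm_nonneg c)⟩
  · refine memDp_of_bound hp (norm_nonneg c) hf.2 hf.2 (fun s g => ?_)
    have key : (c • f) (g * s⁻¹) - (c • f) g = c * (f (g * s⁻¹) - f g) := by
      simp [Pi.smul_apply, smul_eq_mul]; ring
    rw [key, norm_mul]
    nlinarith [norm_nonneg c, norm_nonneg (f (g*s⁻¹) - f g),
      mul_nonneg (norm_nonneg c) (norm_nonneg (f (g*s⁻¹) - f g))]

lemma memBDp_inv {p : ℝ} (hp : 1 ≤ p) {S : Finset G} {F : G → ℂ} {δ : ℝ}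
    (hδ : 0 < δ) (hF : MemBDp p S F) (hlow : ∀ g, δ ≤ ‖F g‖) :
    MemBDp p S (fun g => (F g)⁻¹) := by
  have hne : ∀ g, F g ≠ 0 := fun g hz => by
    have := hlow g; rw [hz] at this; simp at this; linarith
  constructor
  · refine ⟨δ⁻¹, fun g => ?_⟩
    rw [norm_inv]
    exact inv_anti₀ hδ (hlow g)
  · refine memDp_of_bound hp (by positivity : (0:ℝ) ≤ δ⁻¹ * δ⁻¹) hF.2 hF.2 (fun s g => ?_)
    have key : (F (g * s⁻¹))⁻¹ - (F g)⁻¹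
        = (F g - F (g * s⁻¹)) * (F (g * s⁻¹))⁻¹ * (F g)⁻¹ := by
      rw [inv_sub_inv (hne _) (hne g), div_eq_mul_inv, mul_inv]
      ring
    rw [key]
    have h1 : ‖(F (g * s⁻¹))⁻¹‖ ≤ δ⁻¹ := by
      rw [norm_inv]; exact inv_anti₀ hδ (hlow _)
    have h2 : ‖(F g)⁻¹‖ ≤ δ⁻¹ := by
      rw [norm_inv]; exact inv_anti₀ hδ (hlow _)
    have h3 : ‖F g - F (g * s⁻¹)‖ = ‖F (g * s⁻¹) - F g‖ := norm_sub_rev _ _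
    rw [norm_mul, norm_mul, h3]
    have hδi : (0:ℝ) ≤ δ⁻¹ := by positivity
    nlinarith [norm_nonneg (F (g*s⁻¹) - F g), norm_nonneg ((F (g*s⁻¹))⁻¹),
      norm_nonneg ((F g)⁻¹),
      mul_le_mul (mul_le_mul_of_nonneg_left h1 (norm_nonneg (F (g*s⁻¹) - F g))) h2
        (norm_nonneg _) (by positivity)]

variable {p : ℝ} {S : Finset G}

lemma x_congr (x : BDpChar p S) {v w : G → ℂ} (hv : MemBDp p S v) (hw : MemBDp p S w)
    (h : v = w) : x.toFun ⟨v, hv⟩ = x.toFun ⟨w, hw⟩ := by subst h; rfl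

lemma x_sub_const (hp : 1 ≤ p) (x : BDpChar p S) (f : {f : G → ℂ // MemBDp p S f}) (c : ℂ) :
    x.toFun ⟨fun g => f.1 g - c, memBDp_sub_const f.2 c⟩ = x.toFun f - c := by
  have heq : ((fun g => f.1 g - c) + c • (1 : G → ℂ)) = f.1 := by
    funext g; simp
  have hmem : MemBDp p S ((fun g => f.1 g - c) + c • (1 : G → ℂ)) := by
    rw [heq]; exact f.2
  have h1 := x.map_add ⟨fun g => f.1 g - c, memBDp_sub_const f.2 c⟩
    ⟨c • (1 : G → ℂ), memBDp_smul hp c (memBDp_one hp S)⟩ hmem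
  have h2 := x.map_smul c ⟨(1 : G → ℂ), memBDp_one hp S⟩ (memBDp_smul hp c (memBDp_one hp S))
  have h3 := x.map_one (memBDp_one hp S)
  have h4 : x.toFun ⟨(fun g => f.1 g - c) + c • (1 : G → ℂ), hmem⟩ = x.toFun f := by
    refine x_congr x _ _ heq
  rw [h1, h2, h3, mul_one] at h4
  linear_combination h4

lemma x_zero (hp : 1 ≤ p) (x : BDpChar p S) (h : MemBDp p S (0 : G → ℂ)) :
    x.toFun ⟨0, h⟩ = 0 := by
  have hm : MemBDp p S ((0 : ℂ) • (1 : G → ℂ)) := by rw [zero_smul]; exact h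
  have h2 := x.map_smul 0 ⟨(1 : G → ℂ), memBDp_one hp S⟩ hm
  rw [zero_mul] at h2
  rw [← h2]
  exact x_congr x _ _ (zero_smul ℂ (1 : G → ℂ)).symm

lemma memBDp_sum (hp : 1 ≤ p) {ι : Type*} (t : Finset ι) (u : ι → G → ℂ)
    (hu : ∀ i, MemBDp p S (u i)) : MemBDp p S (∑ i ∈ t, u i) := by
  classical
  induction t using Finset.induction_on with
  | empty => simpa using memBDp_zero hp S
  | insert a t ha ih =>
      rw [Finset.sum_insert ha]
      exact memBDp_add hp (hu _) ih

lemma x_sum (hp : 1 ≤ p) (x : BDpChar p S) {ι : Type*} (t : Finset ι) (u : ι → G → ℂ)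
    (hu : ∀ i, MemBDp p S (u i)) (hmem : MemBDp p S (∑ i ∈ t, u i)) :
    x.toFun ⟨∑ i ∈ t, u i, hmem⟩ = ∑ i ∈ t, x.toFun ⟨u i, hu i⟩ := by
  classical
  revert hmem
  induction t using Finset.induction_on with
  | empty =>
      intro hmem
      have h0 : (∑ i ∈ (∅ : Finset ι), u i) = (0 : G → ℂ) := Finset.sum_empty
      have h0m : MemBDp p S (0 : G → ℂ) := by rw [← h0]; exact hmem
      rw [x_congr x hmem h0m h0, x_zero hp x h0m, Finset.sum_empty]
  | insert a t ha ih =>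
      intro hmem
      have hsum : (∑ i ∈ insert a t, u i) = u a + ∑ i ∈ t, u i := Finset.sum_insert ha
      have hm2 : MemBDp p S (∑ i ∈ t, u i) := memBDp_sum hp t u hu
      have hm3 : MemBDp p S (u a + ∑ i ∈ t, u i) := by rw [← hsum]; exact hmem
      rw [x_congr x hmem hm3 hsum]
      have := x.map_add ⟨u a, hu a⟩ ⟨∑ i ∈ t, u i, hm2⟩ hm3
      rw [this, ih hm2, Finset.sum_insert ha]

lemma key (hp : 1 ≤ p) [Nonempty G] (x : BDpChar p S)
    (t : Finset {f : G → ℂ // MemBDp p S f}) {ε : ℝ} (hε : 0 < ε) :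
    ∃ g : G, ∀ f ∈ t, ‖f.1 g - x.toFun f‖ < ε := by
  by_contra hcon
  push_neg at hcon
  set hFun : {f : G → ℂ // MemBDp p S f} → G → ℂ := fun i g => i.1 g - x.toFun i with hFdef
  have hmem_h : ∀ i, MemBDp p S (hFun i) := fun i => memBDp_sub_const i.2 _
  set cF : {f : G → ℂ // MemBDp p S f} → G → ℂ :=
    fun i g => (starRingEnd ℂ) (hFun i g) with hcdef
  have hmem_c : ∀ i, MemBDp p S (cF i) := fun i => memBDp_conj (hmem_h i)
  set term : {f : G → ℂ // MemBDp p S f} → G → ℂ := fun i => hFun i * cF i with htdef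
  have hmem_term : ∀ i, MemBDp p S (term i) := fun i => memBDp_mul hp (hmem_h i) (hmem_c i)
  set F : G → ℂ := ∑ i ∈ t, term i with hFdef2
  have hmemF : MemBDp p S F := memBDp_sum hp t term hmem_term
  have hFval : ∀ g, F g = ((∑ i ∈ t, Complex.normSq (hFun i g) : ℝ) : ℂ) := by
    intro g
    rw [hFdef2, Finset.sum_apply]
    push_cast
    refine Finset.sum_congr rfl (fun i _ => ?_)
    rw [htdef]
    simp only [Pi.mul_apply, hcdef]
    exact Complex.mul_conj (hFun i g)
  have hlow : ∀ g, ε ^ 2 ≤ ‖F g‖ := by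
    intro g
    obtain ⟨i, hit, hi⟩ := hcon g
    have h1 : ε ^ 2 ≤ Complex.normSq (hFun i g) := by
      rw [Complex.normSq_eq_norm_sq]
      have : ε ≤ ‖hFun i g‖ := by
        simpa [hFdef] using hi
      nlinarith
    have h2 : Complex.normSq (hFun i g) ≤ ∑ j ∈ t, Complex.normSq (hFun j g) :=
      Finset.single_le_sum (f := fun j => Complex.normSq (hFun j g))
        (fun j _ => Complex.normSq_nonneg _) hit
    have h3 : (0:ℝ) ≤ ∑ j ∈ t, Complex.normSq (hFun j g) :=
      Finset.sum_nonneg (fun j _ => Complex.normSq_nonneg _)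
    rw [hFval g, Complex.norm_real, Real.norm_of_nonneg h3]
    linarith
  have hε2 : (0:ℝ) < ε ^ 2 := by positivity
  have hne : ∀ g, F g ≠ 0 := by
    intro g hz
    have := hlow g
    rw [hz, norm_zero] at this
    linarith
  set u : G → ℂ := fun g => (F g)⁻¹ with hudef
  have hmemu : MemBDp p S u := memBDp_inv hp hε2 hmemF hlow
  have hFu : F * u = (1 : G → ℂ) := by
    funext g
    exact mul_inv_cancel₀ (hne g)
  have hmemFu : MemBDp p S (F * u) := by rw [hFu]; exact memBDp_one hp S
  have hxF : x.toFun ⟨F, hmemF⟩ = 0 := by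
    rw [x_sum hp x t term hmem_term hmemF]
    refine Finset.sum_eq_zero (fun i _ => ?_)
    have hmul := x.map_mul ⟨hFun i, hmem_h i⟩ ⟨cF i, hmem_c i⟩ (hmem_term i)
    have hzero : x.toFun ⟨hFun i, hmem_h i⟩ = 0 := by
      have := x_sub_const hp x i (x.toFun i)
      rw [sub_self] at this
      exact this
    rw [x_congr x (hmem_term i) (hmem_term i) rfl, hmul, hzero, zero_mul]
  have hone : x.toFun ⟨(1 : G → ℂ), memBDp_one hp S⟩ = 1 := x.map_one _
  have hcontr : (1 : ℂ) = 0 := by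
    rw [← hone, x_congr x (memBDp_one hp S) hmemFu hFu.symm,
      x.map_mul ⟨F, hmemF⟩ ⟨u, hmemu⟩ hmemFu, hxF, zero_mul]
  exact one_ne_zero hcontr

end Aux

/-- the image of `G` under the evaluation map is dense in the
spectrum `Sp(BD_p(G))` with the weak-* topology. -/
theorem evalChar_dense {G : Type*} [Group G] [Infinite G] (S : Finset G)
    (hS : PHB.SymmGen S) (p : ℝ) (hp : 1 ≤ p) :
    Dense (Set.range (PHB.evalChar p S : G → PHB.BDpChar p S)) := by
  classical
  rw [dense_iff_inter_open]
  rintro U hU ⟨x, hxU⟩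
  obtain ⟨V, hV, rfl⟩ := isOpen_induced_iff.mp hU
  obtain ⟨I, w, hIw, hsub⟩ := isOpen_pi_iff.mp hV x.toFun hxU
  have hball : ∀ i ∈ I, ∃ ε > 0, Metric.ball (x.toFun i) ε ⊆ w i := fun i hi =>
    Metric.isOpen_iff.mp (hIw i hi).1 _ (hIw i hi).2
  choose! εf hεf hsubball using hball
  have : Nonempty G := inferInstance
  by_cases hIe : I.Nonempty
  · set ε := I.inf' hIe εf with hεdef
    have hε : 0 < ε := (Finset.lt_inf'_iff hIe).mpr (fun i hi => hεf i hi)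
    obtain ⟨g, hg⟩ := Aux.key hp x I hε
    refine ⟨PHB.evalChar p S g, ?_, ⟨g, rfl⟩⟩
    refine hsub ?_
    rw [Set.mem_pi]
    intro i hi
    refine hsubball i hi ?_
    rw [Metric.mem_ball, dist_eq_norm]
    have h1 : (PHB.evalChar p S g).toFun i = i.1 g := rfl
    rw [h1]
    exact lt_of_lt_of_le (hg i hi) (Finset.inf'_le εf hi)
  · obtain ⟨g⟩ := this
    refine ⟨PHB.evalChar p S g, ?_, ⟨g, rfl⟩⟩
    refine hsub ?_
    rw [Set.mem_pi]
    intro i hi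
    exact absurd ⟨i, hi⟩ hIe
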